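/- Let E be a real Banach lattice, F a real Fréchet space (a complete metrizable locally convex topological vector space over ℝ), and 𝒯 a set of linear maps from E to F each of which maps the closed unit ball B_E to a von Neumann bounded subset of F. Then the set {T x : T ∈ 𝒯, x ∈ D} is relatively compact in F for every pairwise disjoint norm-bounded subset D of E if and only if for every pairwise disjoint norm-bounded sequence (x_n) of positive elements of E the set {T x_n : T ∈ 𝒯, n ∈ ℕ} is relatively compact in F. -/

import Mathlib

open Filter Topology Uniformity

section Aux

variable {E : Type*} [NormedAddCommGroup E] [Lattice E] [HasSolidNorm E] [IsOrderedAddMonoid E] [NormedSpace ℝ E]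
    {F : Type*} [AddCommGroup F] [Module ℝ F] [UniformSpace F] [IsUniformAddGroup F]
    [FirstCountableTopology F]

private lemma posPart_le_abs' (a : E) : a⁺ ≤ |a| := by
  rw [posPart_def]; exact sup_le (le_abs_self a) (abs_nonneg a)

private lemma negPart_le_abs' (a : E) : a⁻ ≤ |a| := by
  rw [negPart_def]; exact sup_le (neg_le_abs a) (abs_nonneg a)

/-- Positive case: relative compactness on pairwise disjoint bounded sets of positive
elements follows from the sequential hypothesis. -/
private lemma aux_pos (𝒯 : Set (E →ₗ[ℝ] F))
    (hseq : ∀ x : ℕ → E, (∀ n, 0 ≤ x n) →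
        (∀ n m, n ≠ m → |x n| ⊓ |x m| = 0) → (∃ C : ℝ, ∀ n, ‖x n‖ ≤ C) →
        IsCompact (closure {z : F | ∃ T ∈ 𝒯, ∃ n : ℕ, z = T (x n)}))
    (D : Set E) (hD : D.Pairwise fun x y => |x| ⊓ |y| = 0)
    (hpos : ∀ a ∈ D, 0 ≤ a) (C : ℝ) (hC : ∀ a ∈ D, ‖a‖ ≤ C) :
    IsCompact (closure {z : F | ∃ T ∈ 𝒯, ∃ x ∈ D, z = T x}) := by
  classical
  have hcg : (𝓤 F).IsCountablyGenerated := IsUniformAddGroup.uniformity_countably_generated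
  set S : Set F := {z : F | ∃ T ∈ 𝒯, ∃ x ∈ D, z = T x} with hS
  suffices h : IsSeqCompact (closure S) from h.isCompact
  intro z hz
  obtain ⟨V, hV⟩ := (𝓤 F).exists_antitone_basis
  have key : ∀ k : ℕ, ∃ T ∈ 𝒯, ∃ a ∈ D, (z k, T a) ∈ V k := by
    intro k
    have hb : UniformSpace.ball (z k) (V k) ∈ 𝓝 (z k) :=
      UniformSpace.ball_mem_nhds _ (hV.mem k)
    obtain ⟨w, hw1, hw2⟩ := mem_closure_iff_nhds.1 (hz k) _ hb
    obtain ⟨T, hT, a, ha, rfl⟩ := hw2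
    exact ⟨T, hT, a, ha, hw1⟩
  choose T hT x hx hzx using key
  set y : ℕ → E := fun n => if ∃ j < n, x j = x n then 0 else x n with hydef
  have hy0 : ∀ n, (∃ j < n, x j = x n) → y n = 0 := by
    intro n h; simp only [hydef]; rw [if_pos h]
  have hy1 : ∀ n, ¬(∃ j < n, x j = x n) → y n = x n := by
    intro n h; simp only [hydef]; rw [if_neg h]
  have hypos : ∀ n, 0 ≤ y n := by
    intro n
    by_cases h : ∃ j < n, x j = x n
    · rw [hy0 n h]
    · rw [hy1 n h]; exact hpos _ (hx n)
  have hydisj : ∀ n m, n ≠ m → |y n| ⊓ |y m| = 0 := by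
    have key0 : ∀ a : E, |(0 : E)| ⊓ |a| = 0 := fun a => by
      rw [abs_zero]; exact inf_eq_left.2 (abs_nonneg a)
    intro n m hnm
    by_cases hxy : x n = x m
    · rcases hnm.lt_or_gt with hlt | hlt
      · rw [hy0 m ⟨n, hlt, hxy⟩, abs_zero]
        exact inf_eq_right.2 (abs_nonneg _)
      · rw [hy0 n ⟨m, hlt, hxy.symm⟩, abs_zero]
        exact inf_eq_left.2 (abs_nonneg _)
    · by_cases h1 : ∃ j < n, x j = x n
      · rw [hy0 n h1, abs_zero]; exact inf_eq_left.2 (abs_nonneg _)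
      · by_cases h2 : ∃ j < m, x j = x m
        · rw [hy0 m h2, abs_zero]; exact inf_eq_right.2 (abs_nonneg _)
        · rw [hy1 n h1, hy1 m h2]
          exact hD (hx n) (hx m) hxy
  have hybdd : ∃ C' : ℝ, ∀ n, ‖y n‖ ≤ C' := by
    refine ⟨max C 0, fun n => ?_⟩
    by_cases h : ∃ j < n, x j = x n
    · rw [hy0 n h]; simpa using le_max_right C 0
    · rw [hy1 n h]; exact (hC _ (hx n)).trans (le_max_left _ _)
  have hK := hseq y hypos hydisj hybdd
  have hmem : ∀ k, T k (x k) ∈ closure {z : F | ∃ T ∈ 𝒯, ∃ n : ℕ, z = T (y n)} := by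
    intro k
    apply subset_closure
    have hex : ∃ j, x j = x k := ⟨k, rfl⟩
    have hj : x (Nat.find hex) = x k := Nat.find_spec hex
    have hyj : y (Nat.find hex) = x (Nat.find hex) := by
      refine hy1 _ ?_
      rintro ⟨i, hilt, hieq⟩
      exact Nat.find_min hex hilt (hieq.trans hj)
    exact ⟨T k, hT k, Nat.find hex, by rw [hyj, hj]⟩
  obtain ⟨l, _, φ, hφ, hconv⟩ := hK.isSeqCompact hmem
  have h1 : Tendsto (fun k => (z (φ k), T (φ k) (x (φ k)))) atTop (𝓤 F) := by
    rw [hV.toHasBasis.tendsto_right_iff]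
    intro i _
    filter_upwards [Filter.eventually_ge_atTop i] with k hk
    exact hV.antitone (hk.trans hφ.le_apply) (hzx (φ k))
  have huni : Tendsto (fun k => (T (φ k) (x (φ k)), z (φ k))) atTop (𝓤 F) :=
    tendsto_swap_uniformity.comp h1
  have hzconv : Tendsto (z ∘ φ) atTop (𝓝 l) := hconv.congr_uniformity huni
  exact ⟨l, isClosed_closure.mem_of_tendsto hzconv
    (Filter.Eventually.of_forall fun k => hz (φ k)), φ, hφ, hzconv⟩

end Aux

/-- For a set `𝒯` of topologically bounded linear maps from a real Banach
lattice `E` to a real Fréchet space `F`: `{T x : T ∈ 𝒯, x ∈ D}` is relatively compact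
for every pairwise disjoint norm-bounded subset `D` of `E` iff `{T xₙ : T ∈ 𝒯, n ∈ ℕ}`
is relatively compact for every pairwise disjoint norm-bounded sequence `(xₙ)` of
positive elements of `E`. -/
theorem relCompact_on_disjoint_bounded_iff_relCompact_on_disjoint_positive_seq
    {E : Type*} [NormedAddCommGroup E] [Lattice E] [HasSolidNorm E] [IsOrderedAddMonoid E] [NormedSpace ℝ E] [CompleteSpace E]
    {F : Type*} [AddCommGroup F] [Module ℝ F] [UniformSpace F] [IsUniformAddGroup F]
    [ContinuousSMul ℝ F] [LocallyConvexSpace ℝ F]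
    [FirstCountableTopology F] [T2Space F] [CompleteSpace F]
    (𝒯 : Set (E →ₗ[ℝ] F))
    (hbdd : ∀ T ∈ 𝒯, Bornology.IsVonNBounded ℝ (T '' Metric.closedBall (0 : E) 1)) :
    (∀ D : Set E, (D.Pairwise fun x y => |x| ⊓ |y| = 0) →
        (∃ C : ℝ, ∀ x ∈ D, ‖x‖ ≤ C) →
        IsCompact (closure {z : F | ∃ T ∈ 𝒯, ∃ x ∈ D, z = T x})) ↔
      (∀ x : ℕ → E, (∀ n, 0 ≤ x n) →
        (∀ n m, n ≠ m → |x n| ⊓ |x m| = 0) → (∃ C : ℝ, ∀ n, ‖x n‖ ≤ C) →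
        IsCompact (closure {z : F | ∃ T ∈ 𝒯, ∃ n : ℕ, z = T (x n)})) := by
  constructor
  · -- forward: apply the set statement to the range of the sequence
    rintro h x _ hdisj ⟨C, hC⟩
    have hpair : (Set.range x).Pairwise fun a b => |a| ⊓ |b| = 0 := by
      rintro _ ⟨n, rfl⟩ _ ⟨m, rfl⟩ hne
      exact hdisj n m fun hnm => hne (by rw [hnm])
    have h2 := h (Set.range x) hpair ⟨C, by rintro a ⟨n, rfl⟩; exact hC n⟩
    have hset : {z : F | ∃ T ∈ 𝒯, ∃ a ∈ Set.range x, z = T a}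
        = {z : F | ∃ T ∈ 𝒯, ∃ n : ℕ, z = T (x n)} := by
      ext w
      constructor
      · rintro ⟨T, hT, a, ⟨n, rfl⟩, rfl⟩; exact ⟨T, hT, n, rfl⟩
      · rintro ⟨T, hT, n, rfl⟩; exact ⟨T, hT, x n, ⟨n, rfl⟩, rfl⟩
    rwa [hset] at h2
  · -- backward: decompose into positive and negative parts
    rintro hseq D hD ⟨C, hC⟩
    set Dp : Set E := (fun a => a⁺) '' D with hDp
    set Dn : Set E := (fun a => a⁻) '' D with hDn
    have habs_nonneg : ∀ a b : E, (0 : E) ≤ |a| ⊓ |b| :=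
      fun a b => le_inf (abs_nonneg a) (abs_nonneg b)
    have hpairp : Dp.Pairwise fun a b => |a| ⊓ |b| = 0 := by
      rintro _ ⟨a, ha, rfl⟩ _ ⟨b, hb, rfl⟩ hne
      have hab : a ≠ b := fun h => hne (by rw [h])
      refine le_antisymm ?_ (habs_nonneg _ _)
      calc |a⁺| ⊓ |b⁺| ≤ |a| ⊓ |b| := by
            refine inf_le_inf ?_ ?_
            · rw [abs_of_nonneg (posPart_nonneg a)]; exact posPart_le_abs' a
            · rw [abs_of_nonneg (posPart_nonneg b)]; exact posPart_le_abs' b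
        _ = 0 := hD ha hb hab
    have hpairn : Dn.Pairwise fun a b => |a| ⊓ |b| = 0 := by
      rintro _ ⟨a, ha, rfl⟩ _ ⟨b, hb, rfl⟩ hne
      have hab : a ≠ b := fun h => hne (by rw [h])
      refine le_antisymm ?_ (habs_nonneg _ _)
      calc |a⁻| ⊓ |b⁻| ≤ |a| ⊓ |b| := by
            refine inf_le_inf ?_ ?_
            · rw [abs_of_nonneg (negPart_nonneg a)]; exact negPart_le_abs' a
            · rw [abs_of_nonneg (negPart_nonneg b)]; exact negPart_le_abs' b
        _ = 0 := hD ha hb hab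
    have hposp : ∀ a ∈ Dp, 0 ≤ a := by rintro _ ⟨a, _, rfl⟩; exact posPart_nonneg a
    have hposn : ∀ a ∈ Dn, 0 ≤ a := by rintro _ ⟨a, _, rfl⟩; exact negPart_nonneg a
    have hCp : ∀ a ∈ Dp, ‖a‖ ≤ C := by
      rintro _ ⟨a, ha, rfl⟩
      refine le_trans (HasSolidNorm.solid ?_) (hC a ha)
      rw [abs_of_nonneg (posPart_nonneg a)]; exact posPart_le_abs' a
    have hCn : ∀ a ∈ Dn, ‖a‖ ≤ C := by
      rintro _ ⟨a, ha, rfl⟩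
      refine le_trans (HasSolidNorm.solid ?_) (hC a ha)
      rw [abs_of_nonneg (negPart_nonneg a)]; exact negPart_le_abs' a
    have hp := aux_pos 𝒯 hseq Dp hpairp hposp C hCp
    have hn := aux_pos 𝒯 hseq Dn hpairn hposn C hCn
    set Kp := closure {z : F | ∃ T ∈ 𝒯, ∃ x ∈ Dp, z = T x} with hKp
    set Kn := closure {z : F | ∃ T ∈ 𝒯, ∃ x ∈ Dn, z = T x} with hKn
    have hK : IsCompact ((fun p : F × F => p.1 - p.2) '' (Kp ×ˢ Kn)) :=
      (hp.prod hn).image continuous_sub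
    have hsub : {z : F | ∃ T ∈ 𝒯, ∃ x ∈ D, z = T x}
        ⊆ (fun p : F × F => p.1 - p.2) '' (Kp ×ˢ Kn) := by
      rintro w ⟨T, hT, a, ha, rfl⟩
      refine ⟨(T a⁺, T a⁻), ⟨subset_closure ⟨T, hT, a⁺, ⟨a, ha, rfl⟩, rfl⟩,
        subset_closure ⟨T, hT, a⁻, ⟨a, ha, rfl⟩, rfl⟩⟩, ?_⟩
      show T a⁺ - T a⁻ = T a
      rw [← map_sub, posPart_sub_negPart]
    exact hK.of_isClosed_subset isClosed_closure (closure_minimal hsub hK.isClosed)
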